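/- arXiv:2601.17626 — 2 statements merged into one kernel-verified Lean document; each statement's English description precedes it below -/
import Mathlib

section
/- Let k ≥ 0, n = k+1, and a, b ∈ ℂ^n, and let p(x,y) = Σ_{i=0}^k (-1)^i x^{k-i} y^i. Then det([p(a_r,b_s)]_{r,s=1}^n) = Π_{1≤i<j≤n}(a_j - a_i) · Π_{1≤i<j≤n}(b_j - b_i). -/
open Equiv Matrix

lemma rev_succ_decomp (n : ℕ) :
    (Fin.revPerm : Perm (Fin (n + 1))) =
      finRotate (n + 1) *
        Equiv.permCongr finSuccEquivLast.symm (Fin.revPerm : Perm (Fin n)).optionCongr := by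
  ext i
  refine Fin.lastCases ?_ ?_ i
  · simp [Equiv.permCongr_apply, finSuccEquivLast_last]
  · intro j
    simp only [Perm.mul_apply, Equiv.permCongr_apply, Equiv.symm_symm,
      finSuccEquivLast_castSucc, optionCongr_apply, Option.map_some,
      finSuccEquivLast_symm_some, Fin.revPerm_apply]
    rw [finRotate_succ_apply]
    have hj := j.isLt
    rw [Fin.val_rev, Fin.val_add_one_of_lt (Fin.castSucc_lt_last _), Fin.coe_castSucc,
      Fin.coe_castSucc, Fin.val_rev]
    omega

lemma sign_revPerm (n : ℕ) :
    Equiv.Perm.sign (Fin.revPerm : Perm (Fin n)) = (-1) ^ (∑ i ∈ Finset.range n, i) := by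
  induction n with
  | zero => simp [Subsingleton.elim (Fin.revPerm : Perm (Fin 0)) 1]
  | succ n ih =>
    rw [rev_succ_decomp, _root_.map_mul, sign_finRotate, Equiv.Perm.sign_permCongr,
      Equiv.optionCongr_sign, ih, Finset.sum_range_succ, pow_add, mul_comm, Nat.add_sub_cancel]

theorem stmt_9 (k : ℕ) (a b : Fin (k + 1) → ℂ) :
    Matrix.det (Matrix.of fun r s : Fin (k + 1) =>
        ∑ i ∈ Finset.range (k + 1), (-1 : ℂ) ^ i * a r ^ (k - i) * b s ^ i) =
      (∏ i : Fin (k + 1), ∏ j : Fin (k + 1), if i < j then a j - a i else 1) *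
        (∏ i : Fin (k + 1), ∏ j : Fin (k + 1), if i < j then b j - b i else 1) := by
  have hrhs : ∀ v : Fin (k + 1) → ℂ,
      (∏ i : Fin (k + 1), ∏ j : Fin (k + 1), if i < j then v j - v i else 1) =
        Matrix.det (Matrix.vandermonde v) := by
    intro v
    rw [Matrix.det_vandermonde]
    refine Finset.prod_congr rfl fun i _ => ?_
    rw [← Finset.prod_filter]
    congr 1
    ext j
    simp
  rw [hrhs a, hrhs b]
  have hM : (Matrix.of fun r s : Fin (k + 1) =>
        ∑ i ∈ Finset.range (k + 1), (-1 : ℂ) ^ i * a r ^ (k - i) * b s ^ i) =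
      (Matrix.vandermonde a).submatrix id Fin.revPerm *
        Matrix.of (fun (i : Fin (k + 1)) s => (-1 : ℂ) ^ (i : ℕ) * b s ^ (i : ℕ)) := by
    ext r s
    simp only [Matrix.of_apply, Matrix.mul_apply, Matrix.submatrix_apply, id_eq,
      Fin.revPerm_apply, Matrix.vandermonde_apply, Fin.val_rev]
    rw [Fin.sum_univ_eq_sum_range
      (fun i => a r ^ (k + 1 - (i + 1)) * ((-1 : ℂ) ^ i * b s ^ i))]
    refine Finset.sum_congr rfl fun i hi => ?_
    have : k + 1 - (i + 1) = k - i := by omega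
    rw [this]; ring
  rw [hM, Matrix.det_mul, Matrix.det_permute', sign_revPerm]
  have hB : Matrix.det (Matrix.of fun (i : Fin (k + 1)) s =>
        (-1 : ℂ) ^ (i : ℕ) * b s ^ (i : ℕ)) =
      (-1 : ℂ) ^ (∑ i ∈ Finset.range (k + 1), i) * Matrix.det (Matrix.vandermonde b) := by
    rw [← Matrix.det_transpose]
    have : Matrix.transpose (Matrix.of fun (i : Fin (k + 1)) s =>
          (-1 : ℂ) ^ (i : ℕ) * b s ^ (i : ℕ)) =
        Matrix.of fun s (i : Fin (k + 1)) =>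
          (fun i : Fin (k + 1) => (-1 : ℂ) ^ (i : ℕ)) i * Matrix.vandermonde b s i := rfl
    rw [this, Matrix.det_mul_row]
    congr 1
    rw [Finset.prod_pow_eq_pow_sum]
    congr 1
    exact Fin.sum_univ_eq_sum_range (fun i => i) (k + 1)
  rw [hB]
  simp only [Units.val_pow_eq_pow_val, Units.val_neg, Units.val_one, Int.cast_pow,
    Int.cast_neg, Int.cast_one]
  set m := ∑ i ∈ Finset.range (k + 1), i
  have hs : ((-1 : ℂ) ^ m) * ((-1 : ℂ) ^ m) = 1 := by
    rw [← pow_add, ← two_mul, pow_mul]; norm_num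
  ring_nf
  ring_nf at hs
  rw [hs, mul_one]
end

section
/- Let n = k+1, f(t) = Σ_{i=0}^k α_i t^i a univariate polynomial over ℂ with α_k ≠ 0, and a, b ∈ ℂ^n. Then det([f(a_r + b_s)]_{r,s=1}^n) = α_k^n · (-1)^{C(n,2)} · (Π_{i=0}^k C(k,i)) · Π_{1≤r<r'≤n}(a_{r'} - a_r) · Π_{1≤s<s'≤n}(b_{s'} - b_s). -/
open Finset Matrix Equiv

private lemma rev_decompose' (m : ℕ) : (Fin.revPerm : Equiv.Perm (Fin (m+2))) =
    Equiv.Perm.decomposeFin.symm (Fin.last (m+1), Fin.revPerm * finRotate (m+1)) := by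
  ext i
  refine Fin.cases ?_ ?_ i
  · simp
  · intro j
    rw [Equiv.Perm.decomposeFin_symm_apply_succ]
    simp only [Equiv.Perm.coe_mul, Function.comp_apply, Fin.revPerm_apply]
    rcases eq_or_ne j (Fin.last m) with h | h
    · subst h
      simp [Equiv.swap_apply_def, Fin.ext_iff, coe_finRotate]
    · have hv : (j : ℕ) ≠ m := fun hh => h (Fin.ext hh)
      have hj : (j : ℕ) < m := lt_of_le_of_ne (Nat.lt_succ_iff.1 j.isLt) hv
      have hval : ((j + 1 : Fin (m+1)) : ℕ) = (j:ℕ) + 1 := by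
        rw [Fin.val_add_one, if_neg h]
      simp only [hval, Equiv.swap_apply_def, Fin.ext_iff, Fin.val_rev, coe_finRotate,
        Fin.val_succ, Fin.val_last, Fin.val_zero, if_neg h, Fin.val_add_one]
      split_ifs with h1 h2 <;> simp_all [hval] <;> omega

private lemma sign_rev' (n : ℕ) :
    Equiv.Perm.sign (Fin.revPerm : Equiv.Perm (Fin n)) = (-1)^(n.choose 2) := by
  induction n with
  | zero => simp [Subsingleton.elim (Fin.revPerm) 1]
  | succ m ih =>
    match m, ih with
    | 0, _ => simp [Subsingleton.elim (Fin.revPerm : Equiv.Perm (Fin 1)) 1]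
    | (k+1), ih =>
      rw [rev_decompose', Equiv.Perm.decomposeFin.symm_sign, if_neg (by simp [Fin.ext_iff]),
        Equiv.Perm.sign_mul, ih, sign_finRotate]
      rw [← pow_add]
      rw [show (k+2).choose 2 = (k+1).choose 2 + (k+1) by
        rw [Nat.choose_two_right, Nat.choose_two_right, Nat.triangle_succ (k+1)]]
      rw [show (k+1).choose 2 + (k+1) = (k + (k+1).choose 2) + 1 by omega, pow_succ]
      rw [mul_comm, add_comm k ((k+1).choose 2)]
      simp

private lemma key_sum' (k : ℕ) (α' : ℕ → ℂ) (x y : ℂ) :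
    ∑ i ∈ range (k+1), α' i * (x+y)^i
      = ∑ j ∈ range (k+1), ∑ m ∈ range (k+1),
          x^j * ((if j + m ≤ k then α' (j+m) * ((j+m).choose j : ℂ) else 0) * y^m) := by
  have hsplit : ∀ j m : ℕ,
      x^j * ((if j + m ≤ k then α' (j+m) * ((j+m).choose j : ℂ) else 0) * y^m)
      = if j + m ≤ k then α' (j+m) * (x^j * y^m * ((j+m).choose j : ℂ)) else 0 := by
    intro j m; split <;> ring
  simp_rw [hsplit]
  rw [← Finset.sum_product']
  rw [← Finset.sum_filter]
  simp_rw [add_pow, Finset.mul_sum]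
  rw [Finset.sum_sigma']
  refine Finset.sum_nbij' (i := fun p => ((p.2 : ℕ), p.1 - p.2)) (j := fun p => ⟨p.1 + p.2, p.1⟩)
    ?_ ?_ ?_ ?_ ?_
  · rintro ⟨i, j⟩ hp
    simp only [Finset.mem_sigma, Finset.mem_range] at hp
    simp only [Finset.mem_filter, Finset.mem_product, Finset.mem_range]
    omega
  · rintro ⟨j, m⟩ hp
    simp only [Finset.mem_filter, Finset.mem_product, Finset.mem_range] at hp
    simp only [Finset.mem_sigma, Finset.mem_range]
    omega
  · rintro ⟨i, j⟩ hp
    simp only [Finset.mem_sigma, Finset.mem_range] at hp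
    have h1 : (j:ℕ) + (i - j) = i := by omega
    simp [h1]
  · rintro ⟨j, m⟩ hp
    simp
  · rintro ⟨i, j⟩ hp
    simp only [Finset.mem_sigma, Finset.mem_range] at hp
    simp only
    have h1 : j + (i - j) = i := by omega
    rw [h1]

private lemma sum_fin_fin (n : ℕ) (g : ℕ → ℕ → ℂ) :
    ∑ m : Fin n, ∑ j : Fin n, g (j : ℕ) (m : ℕ) = ∑ m ∈ range n, ∑ j ∈ range n, g j m := by
  rw [Fin.sum_univ_eq_sum_range (fun m => ∑ j : Fin n, g (j : ℕ) m)]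
  exact Finset.sum_congr rfl fun m _ => Fin.sum_univ_eq_sum_range (fun j => g j m) n

private lemma ite_prod_eq_vdm (n : ℕ) (v : Fin n → ℂ) :
    (∏ r : Fin n, ∏ r' : Fin n, if r < r' then v r' - v r else 1) =
      (Matrix.vandermonde v).det := by
  rw [Matrix.det_vandermonde]
  refine Finset.prod_congr rfl fun r _ => ?_
  rw [← Finset.prod_filter, Finset.filter_lt_eq_Ioi]

theorem stmt_14 (k : ℕ) (α : Fin (k + 1) → ℂ) (hα : α (Fin.last k) ≠ 0)
    (a b : Fin (k + 1) → ℂ) :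
    Matrix.det (Matrix.of fun r s : Fin (k + 1) =>
        ∑ i : Fin (k + 1), α i * (a r + b s) ^ (i : ℕ)) =
      α (Fin.last k) ^ (k + 1) * (-1 : ℂ) ^ ((k + 1).choose 2) *
        (∏ i ∈ Finset.range (k + 1), (k.choose i : ℂ)) *
        (∏ r : Fin (k + 1), ∏ r' : Fin (k + 1), if r < r' then a r' - a r else 1) *
        (∏ s : Fin (k + 1), ∏ s' : Fin (k + 1), if s < s' then b s' - b s else 1) := by
  set α' : ℕ → ℂ := fun i => if h : i < k + 1 then α ⟨i, h⟩ else 0 with hα'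
  have hαα' : ∀ i : Fin (k+1), α i = α' (i : ℕ) := by
    intro i; simp [hα', i.isLt, Fin.is_le]
  set D : Matrix (Fin (k+1)) (Fin (k+1)) ℂ := Matrix.of fun j m =>
    if (j : ℕ) + (m : ℕ) ≤ k then α' ((j : ℕ) + (m : ℕ)) * (((j : ℕ) + (m : ℕ)).choose j : ℂ)
    else 0 with hD
  -- factorization
  have key : (Matrix.of fun r s : Fin (k + 1) =>
      ∑ i : Fin (k + 1), α i * (a r + b s) ^ (i : ℕ)) =
      Matrix.vandermonde a * D * (Matrix.vandermonde b)ᵀ := by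
    ext r s
    rw [Matrix.mul_apply]
    simp only [Matrix.mul_apply, Matrix.transpose_apply, Matrix.vandermonde_apply,
      Matrix.of_apply, hD, Finset.sum_mul]
    simp_rw [hαα', mul_assoc]
    rw [Fin.sum_univ_eq_sum_range (fun i => α' i * (a r + b s)^i)]
    rw [key_sum' k α' (a r) (b s), Finset.sum_comm]
    exact (sum_fin_fin (k+1) (fun j m => a r ^ j *
      ((if j + m ≤ k then α' (j + m) * ((j+m).choose j : ℂ) else 0) * b s ^ m))).symm
  -- determinant of D
  have hE : (D.submatrix Fin.revPerm id).det = ∏ j : Fin (k+1), D.submatrix Fin.revPerm id j j := by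
    apply Matrix.det_of_lowerTriangular
    intro i j hij
    have hij' : (i : ℕ) < (j : ℕ) := hij
    simp only [Matrix.submatrix_apply, hD, Matrix.of_apply, Fin.revPerm_apply, Fin.val_rev, id]
    rw [if_neg (by omega)]
  have hdiag : ∀ j : Fin (k+1), D.submatrix Fin.revPerm id j j
      = α (Fin.last k) * (k.choose (k - (j : ℕ)) : ℂ) := by
    intro j
    simp only [Matrix.submatrix_apply, hD, Matrix.of_apply, Fin.revPerm_apply, Fin.val_rev, id]
    rw [show k + 1 - ((j:ℕ) + 1) = k - (j:ℕ) from by omega]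
    rw [if_pos (by omega), show k - (j:ℕ) + (j:ℕ) = k from by omega]
    congr 1
    simp only [hα']
    rw [dif_pos (Nat.lt_succ_self k)]
    rfl
  have hprod : ∏ j : Fin (k+1), D.submatrix Fin.revPerm id j j
      = α (Fin.last k)^(k+1) * ∏ i ∈ range (k+1), (k.choose i : ℂ) := by
    rw [Finset.prod_congr rfl (fun j _ => hdiag j), Finset.prod_mul_distrib,
      Finset.prod_const, Finset.card_univ, Fintype.card_fin]
    congr 1
    rw [Fin.prod_univ_eq_prod_range (fun j => (k.choose (k - j) : ℂ))]
    calc ∏ j ∈ range (k+1), (k.choose (k - j) : ℂ)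
        = ∏ j ∈ range (k+1), (k.choose (k + 1 - 1 - j) : ℂ) := by
          refine Finset.prod_congr rfl fun j hj => ?_
          have h3 : k - j = k + 1 - 1 - j := by omega
          rw [h3]
      _ = ∏ j ∈ range (k+1), (k.choose j : ℂ) :=
          Finset.prod_range_reflect (fun j => (k.choose j : ℂ)) (k+1)
  have hperm := Matrix.det_permute (Fin.revPerm) D
  rw [hE, hprod, sign_rev'] at hperm
  simp only [Units.val_pow_eq_pow_val, Units.val_neg, Units.val_one, Int.cast_pow,
    Int.cast_neg, Int.cast_one] at hperm
  have h2 : ((-1:ℂ))^((k+1).choose 2) * (-1)^((k+1).choose 2) = 1 := by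
    rw [← pow_add]; exact Even.neg_one_pow ⟨_, rfl⟩
  have hDdet : D.det = (-1:ℂ)^((k+1).choose 2) *
      (α (Fin.last k)^(k+1) * ∏ i ∈ range (k+1), (k.choose i : ℂ)) := by
    rw [hperm, ← mul_assoc, h2, one_mul]
  rw [key, Matrix.det_mul, Matrix.det_mul, Matrix.det_transpose, hDdet,
    ← ite_prod_eq_vdm, ← ite_prod_eq_vdm]
  ring
end
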